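/- If for each $y_0 \in Y$ one has $\sup_{y_1 \in Y,\, y_0 \leq y \leq y_1} \left[ \frac{D^{min}_\mu(y_0,y_1,k(y_0))}{y_1 - y_0} - \bar\nu(y) \right] < 0$, where $\bar\nu$ is the Lebesgue density of $\nu$, then $(c,\mu,\nu)$ is nested. (In particular, the hypothesis implies $D^{min}_\mu(y_0,y_1,k(y_0)) < \nu([y_0,y_1])$ for all $y_0 < y_1$, by integrating the pointwise density bound over $[y_0,y_1]$.) -/

import Mathlib

open MeasureTheory Set

noncomputable section

/-- Super-level set `X_{≥}(y,k)` of `∂_y c(·,y)` within `X`. -/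
def Xge {m : ℕ} (X : Set (EuclideanSpace ℝ (Fin m)))
    (c : EuclideanSpace ℝ (Fin m) → ℝ → ℝ) (y k : ℝ) : Set (EuclideanSpace ℝ (Fin m)) :=
  {x ∈ X | k ≤ deriv (c x) y}

/-- Level set `X_{=}(y,k)`. -/
def Xeq {m : ℕ} (X : Set (EuclideanSpace ℝ (Fin m)))
    (c : EuclideanSpace ℝ (Fin m) → ℝ → ℝ) (y k : ℝ) : Set (EuclideanSpace ℝ (Fin m)) :=
  {x ∈ X | deriv (c x) y = k}

/-- Strict super-level set `X_{>}(y,k) = X_{≥}(y,k) \ X_{=}(y,k)`. -/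
def Xgt {m : ℕ} (X : Set (EuclideanSpace ℝ (Fin m)))
    (c : EuclideanSpace ℝ (Fin m) → ℝ → ℝ) (y k : ℝ) : Set (EuclideanSpace ℝ (Fin m)) :=
  Xge X c y k \ Xeq X c y k

/-- `k_max(y₀,y₁,k₀) = sup{k : X_{≥}(y₀,k₀) ⊆ X_{≥}(y₁,k)}`. -/
def kmax {m : ℕ} (X : Set (EuclideanSpace ℝ (Fin m)))
    (c : EuclideanSpace ℝ (Fin m) → ℝ → ℝ) (y0 y1 k0 : ℝ) : ℝ :=
  sSup {k : ℝ | Xge X c y0 k0 ⊆ Xge X c y1 k}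

/-- Minimal mass difference `D^{min}_μ(y₀,y₁,k₀)`. -/
def Dmin {m : ℕ} (μ : Measure (EuclideanSpace ℝ (Fin m)))
    (X : Set (EuclideanSpace ℝ (Fin m))) (c : EuclideanSpace ℝ (Fin m) → ℝ → ℝ)
    (y0 y1 k0 : ℝ) : ENNReal :=
  μ (Xge X c y1 (kmax X c y0 y1 k0) \ Xge X c y0 k0)

/-- The model `(c,μ,ν)` is nested. -/
def Nested {m : ℕ} (ν : Measure ℝ) (X : Set (EuclideanSpace ℝ (Fin m)))
    (c : EuclideanSpace ℝ (Fin m) → ℝ → ℝ) (Y : Set ℝ) (k : ℝ → ℝ) : Prop :=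
  ∀ y0 ∈ Y, ∀ y1 ∈ Y, y0 < y1 → 0 < ν (Icc y0 y1) →
    Xge X c y0 (k y0) ⊆ Xgt X c y1 (k y1)

theorem stmt2 {m : ℕ} (X : Set (EuclideanSpace ℝ (Fin m))) (Y : Set ℝ)
    (hXopen : IsOpen X) (hXbdd : Bornology.IsBounded X)
    (hYopen : IsOpen Y) (hYbdd : Bornology.IsBounded Y)
    (c : EuclideanSpace ℝ (Fin m) → ℝ → ℝ)
    (hc : ContDiff ℝ 2 (fun p : EuclideanSpace ℝ (Fin m) × ℝ => c p.1 p.2))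
    (μ : Measure (EuclideanSpace ℝ (Fin m))) (ν : Measure ℝ)
    [IsProbabilityMeasure μ] [IsProbabilityMeasure ν]
    (hμac : μ ≪ volume) (hνac : ν ≪ volume)
    (hμsupp : μ (closure X) = 1) (hνsupp : ν (closure Y) = 1)
    (k : ℝ → ℝ)
    (hk : ∀ y ∈ Y, μ (Xge X c y (k y)) = ν (Iic y))
    (barν : ℝ → ℝ)
    (hdens : ν = volume.withDensity (fun y => ENNReal.ofReal (barν y)))
    (h : ∀ y0 ∈ Y,
      sSup {r : ℝ | ∃ y1 ∈ Y, y0 < y1 ∧ ∃ y, y0 ≤ y ∧ y ≤ y1 ∧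
        r = (Dmin μ X c y0 y1 (k y0)).toReal / (y1 - y0) - barν y} < 0) :
    Nested ν X c Y k := by
  intro y0 hy0 y1 hy1 hlt _hpos
  rcases Set.eq_empty_or_nonempty (Xge X c y0 (k y0)) with hemp | hne
  · rw [hemp]; exact empty_subset _
  -- continuity of the partial derivative in x
  have hgcont : ∀ y : ℝ, Continuous fun x => deriv (c x) y := by
    intro y
    have hdiff : Differentiable ℝ (fun p : EuclideanSpace ℝ (Fin m) × ℝ => c p.1 p.2) :=
      hc.differentiable (by norm_num)
    have key : ∀ x : EuclideanSpace ℝ (Fin m), deriv (c x) y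
        = fderiv ℝ (fun p : EuclideanSpace ℝ (Fin m) × ℝ => c p.1 p.2) (x, y) (0, 1) := by
      intro x
      have h1 : HasDerivAt (fun t : ℝ => ((x, t) : EuclideanSpace ℝ (Fin m) × ℝ)) (0, 1) y :=
        (hasDerivAt_const y x).prodMk (hasDerivAt_id y)
      exact ((hdiff (x, y)).hasFDerivAt.comp_hasDerivAt y h1).deriv
    have hcont : Continuous
        (fderiv ℝ (fun p : EuclideanSpace ℝ (Fin m) × ℝ => c p.1 p.2)) :=
      hc.continuous_fderiv (by norm_num)
    simp only [key]
    exact (hcont.comp (continuous_id.prodMk continuous_const)).clm_apply continuous_const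
  have hXmeas : ∀ y k' : ℝ, MeasurableSet (Xge X c y k') := by
    intro y k'
    have : Xge X c y k' = X ∩ (fun x => deriv (c x) y) ⁻¹' Ici k' := rfl
    rw [this]
    exact hXopen.measurableSet.inter ((hgcont y).measurable measurableSet_Ici)
  set S : Set ℝ := {κ : ℝ | Xge X c y0 (k y0) ⊆ Xge X c y1 κ} with hS
  -- S is nonempty
  have hcomp : IsCompact (closure X) := hXbdd.isCompact_closure
  obtain ⟨b, hb⟩ := (hcomp.image (hgcont y1)).bddBelow
  have hSne : S.Nonempty := by
    refine ⟨b, fun x hx => ⟨hx.1, hb ⟨x, subset_closure hx.1, rfl⟩⟩⟩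
  obtain ⟨x0, hx0⟩ := hne
  have hSbdd : BddAbove S := ⟨deriv (c x0) y1, fun κ hκ => (hκ hx0).2⟩
  set km := kmax X c y0 y1 (k y0) with hkm
  have hsub : Xge X c y0 (k y0) ⊆ Xge X c y1 km := by
    intro x hx
    exact ⟨hx.1, csSup_le hSne fun κ hκ => (hκ hx).2⟩
  -- mass identity
  have hμeq : μ (Xge X c y1 km) = ν (Iic y0) + Dmin μ X c y0 y1 (k y0) := by
    have := measure_add_diff (μ := μ) (hXmeas y0 (k y0)).nullMeasurableSet (Xge X c y1 km)
    rw [union_eq_self_of_subset_left hsub, hk y0 hy0] at this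
    exact this.symm
  -- the strict mass bound from the density hypothesis
  have hDne : Dmin μ X c y0 y1 (k y0) ≠ ⊤ := (measure_ne_top μ _)
  have hD : Dmin μ X c y0 y1 (k y0) < ν (Icc y0 y1) := by
    set T : Set ℝ := {r : ℝ | ∃ y1' ∈ Y, y0 < y1' ∧ ∃ y, y0 ≤ y ∧ y ≤ y1' ∧
        r = (Dmin μ X c y0 y1' (k y0)).toReal / (y1' - y0) - barν y} with hT
    have hs := h y0 hy0
    have hTbdd : BddAbove T := by
      by_contra hbd
      rw [Real.sSup_of_not_bddAbove hbd] at hs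
      exact lt_irrefl 0 hs
    set s : ℝ := sSup T with hsdef
    set D : ℝ := (Dmin μ X c y0 y1 (k y0)).toReal with hDdef
    have hΔ : (0:ℝ) < y1 - y0 := sub_pos.mpr hlt
    set a : ℝ := D / (y1 - y0) - s with ha
    have hDnn : 0 ≤ D := ENNReal.toReal_nonneg
    have hapos : 0 < a := by
      have : 0 ≤ D / (y1 - y0) := div_nonneg hDnn hΔ.le
      have hs0 : s < 0 := hs
      simp only [ha]; linarith
    have hpt : ∀ y ∈ Icc y0 y1, ENNReal.ofReal a ≤ ENNReal.ofReal (barν y) := by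
      intro y hy
      have hmem : D / (y1 - y0) - barν y ∈ T :=
        ⟨y1, hy1, hlt, y, hy.1, hy.2, rfl⟩
      have := le_csSup hTbdd hmem
      exact ENNReal.ofReal_le_ofReal (by simp only [ha]; linarith)
    have hν : ENNReal.ofReal a * volume (Icc y0 y1) ≤ ν (Icc y0 y1) := by
      rw [hdens, withDensity_apply _ measurableSet_Icc, ← setLIntegral_const (Icc y0 y1) (ENNReal.ofReal a)]
      refine lintegral_mono_ae ?_
      exact (ae_restrict_iff' measurableSet_Icc).2 (Filter.Eventually.of_forall hpt)
    have hvol : volume (Icc y0 y1) = ENNReal.ofReal (y1 - y0) := Real.volume_Icc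
    have hcalc : ENNReal.ofReal a * volume (Icc y0 y1)
        = Dmin μ X c y0 y1 (k y0) + ENNReal.ofReal ((-s) * (y1 - y0)) := by
      rw [hvol, ← ENNReal.ofReal_mul hapos.le]
      have : a * (y1 - y0) = D + (-s) * (y1 - y0) := by
        rw [ha, sub_mul, div_mul_cancel₀ _ hΔ.ne']
        ring
      rw [this, ENNReal.ofReal_add hDnn (mul_nonneg (neg_nonneg.2 (le_of_lt hs)) hΔ.le), hDdef, ENNReal.ofReal_toReal hDne]
    have hfinal : Dmin μ X c y0 y1 (k y0) < ENNReal.ofReal a * volume (Icc y0 y1) := by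
      rw [hcalc]
      refine ENNReal.lt_add_right hDne ?_
      have : 0 < (-s) * (y1 - y0) := mul_pos (neg_pos.2 hs) hΔ
      exact (ENNReal.ofReal_pos.2 this).ne'
    exact lt_of_lt_of_le hfinal hν
  -- ν (Icc) ≤ ν (Ioc)
  have hIccIoc : ν (Icc y0 y1) ≤ ν (Ioc y0 y1) := by
    have h1 : ν (Icc y0 y1) ≤ ν {y0} + ν (Ioc y0 y1) := by
      refine le_trans (measure_mono ?_) (measure_union_le _ _)
      intro y hy
      rcases eq_or_lt_of_le hy.1 with heq | hlt'
      · exact Or.inl heq.symm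
      · exact Or.inr ⟨hlt', hy.2⟩
    have h0 : ν {y0} = 0 := hνac Real.volume_singleton
    rwa [h0, zero_add] at h1
  have hIic : ν (Iic y1) = ν (Iic y0) + ν (Ioc y0 y1) := by
    rw [← measure_union (Set.Iic_disjoint_Ioc le_rfl) measurableSet_Ioc,
      Iic_union_Ioc_eq_Iic hlt.le]
  -- kmax > k y1
  have hklt : k y1 < km := by
    by_contra hle
    push_neg at hle
    have hmono : Xge X c y1 (k y1) ⊆ Xge X c y1 km :=
      fun x hx => ⟨hx.1, le_trans hle hx.2⟩
    have : ν (Iic y1) < ν (Iic y1) := by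
      calc ν (Iic y1) = μ (Xge X c y1 (k y1)) := (hk y1 hy1).symm
        _ ≤ μ (Xge X c y1 km) := measure_mono hmono
        _ = ν (Iic y0) + Dmin μ X c y0 y1 (k y0) := hμeq
        _ < ν (Iic y0) + ν (Icc y0 y1) := ENNReal.add_lt_add_left (measure_ne_top ν _) hD
        _ ≤ ν (Iic y0) + ν (Ioc y0 y1) := by gcongr
        _ = ν (Iic y1) := hIic.symm
    exact lt_irrefl _ this
  intro x hx
  have h2 : km ≤ deriv (c x) y1 := (hsub hx).2
  exact ⟨⟨hx.1, le_trans hklt.le h2⟩, fun hcon => absurd hcon.2 (by linarith)⟩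


end
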